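/- Let p > 3 and c be distinct primes with c·p ≡ 3 (mod 4), let q be a prime satisfying condition (1), and let r' be an integer with r'² + c·p ≡ 0 (mod 4q). Then the ℤ-submodule O'_c(q,r') of ℍ[ℚ, −cp, −q] is closed under multiplication (hence is a subring containing 1), and its discriminant with respect to the basis e₁ = 1, e₂ = (1+i)/2, e₃ = j, e₄ = (r'·j+i·j)/(2q), namely det(Trd(e_s · star(e_t)))_{1≤s,t≤4}, equals c²·p². -/

import Mathlib

open Quaternion

/-- Condition (1) on the prime `q`. -/
def SatisfiesCond1 (p c q : ℕ) (hq : q.Prime) : Prop :=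
  (Odd c ∧ q % 8 = 3 ∧ @legendreSym q ⟨hq⟩ (p : ℤ) = -1 ∧ @legendreSym q ⟨hq⟩ (c : ℤ) = 1) ∨
  (c = 2 ∧ q % 8 = 7 ∧ @legendreSym q ⟨hq⟩ (p : ℤ) = -1)

/-- The reduced trace of a quaternion, `Trd x = x + star x`, as a rational number. -/
def Trd {a b : ℚ} (x : ℍ[ℚ, a, b]) : ℚ := (x + star x).re

/-- The basis `1, (1+i)/2, j, (r'·j+i·j)/(2q)` of the Eichler order `O'_c(q,r')`
inside `ℍ[ℚ, −cp, −q]`. -/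
noncomputable def O'Basis (p c q : ℕ) (r' : ℤ) :
    Fin 4 → ℍ[ℚ, -((c : ℚ) * (p : ℚ)), -(q : ℚ)] :=
  ![1,
    (2 : ℚ)⁻¹ • (1 + (⟨0, 1, 0, 0⟩ : ℍ[ℚ, -((c : ℚ) * (p : ℚ)), -(q : ℚ)])),
    (⟨0, 0, 1, 0⟩ : ℍ[ℚ, -((c : ℚ) * (p : ℚ)), -(q : ℚ)]),
    (2 * (q : ℚ))⁻¹ • ((r' : ℚ) • (⟨0, 0, 1, 0⟩ : ℍ[ℚ, -((c : ℚ) * (p : ℚ)), -(q : ℚ)]) +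
      (⟨0, 1, 0, 0⟩ : ℍ[ℚ, -((c : ℚ) * (p : ℚ)), -(q : ℚ)]) * ⟨0, 0, 1, 0⟩)]

/-- The ℤ-submodule `O'_c(q,r')` of `ℍ[ℚ, −cp, −q]` spanned by
`1, (1+i)/2, j, (r'·j+i·j)/(2q)`. -/
noncomputable def O'cqr (p c q : ℕ) (r' : ℤ) :
    Submodule ℤ ℍ[ℚ, -((c : ℚ) * (p : ℚ)), -(q : ℚ)] :=
  Submodule.span ℤ (Set.range (O'Basis p c q r'))

section Aux
variable {cp q r m n s : ℚ}

local notation "Iq" => (⟨0, 1, 0, 0⟩ : ℍ[ℚ, -cp, -q])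
local notation "Jq" => (⟨0, 0, 1, 0⟩ : ℍ[ℚ, -cp, -q])

theorem L22 (hq : q ≠ 0) (hm : r^2 + cp = 4*q*m) (hn : cp + 1 = 4*n) (hs : r = 2*s+1) :
    ((2 : ℚ)⁻¹ • (1 + Iq)) * ((2 : ℚ)⁻¹ • (1 + Iq)) =
      (-n) • 1 + (2 : ℚ)⁻¹ • (1 + Iq) := by
  subst hs
  have hcp2 : cp = 4*q*m - (2*s+1)^2 := by linarith
  subst hcp2
  ext <;> simp [QuaternionAlgebra.re_mul, QuaternionAlgebra.imI_mul,
    QuaternionAlgebra.imJ_mul, QuaternionAlgebra.imK_mul] <;> (try field_simp) <;>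
  first | ring1 | linear_combination hn | linear_combination 2*hn | linear_combination (-hn) | linear_combination (-2*hn) | linear_combination 4*hn | linear_combination (-4*hn)


theorem L23 (hq : q ≠ 0) (hm : r^2 + cp = 4*q*m) (hn : cp + 1 = 4*n) (hs : r = 2*s+1) :
    ((2 : ℚ)⁻¹ • (1 + Iq)) * Jq =
      (-s) • Jq + q • ((2 * q)⁻¹ • (r • Jq + Iq * Jq)) := by
  subst hs
  have hcp2 : cp = 4*q*m - (2*s+1)^2 := by linarith
  subst hcp2
  ext <;> simp [QuaternionAlgebra.re_mul, QuaternionAlgebra.imI_mul,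
    QuaternionAlgebra.imJ_mul, QuaternionAlgebra.imK_mul] <;> (try field_simp) <;>
  first | ring1 | linear_combination hn | linear_combination 2*hn | linear_combination (-hn) | linear_combination (-2*hn) | linear_combination 4*hn | linear_combination (-4*hn)


theorem L32 (hq : q ≠ 0) (hm : r^2 + cp = 4*q*m) (hn : cp + 1 = 4*n) (hs : r = 2*s+1) :
    Jq * ((2 : ℚ)⁻¹ • (1 + Iq)) =
      (s+1) • Jq + (-q) • ((2 * q)⁻¹ • (r • Jq + Iq * Jq)) := by
  subst hs
  have hcp2 : cp = 4*q*m - (2*s+1)^2 := by linarith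
  subst hcp2
  ext <;> simp [QuaternionAlgebra.re_mul, QuaternionAlgebra.imI_mul,
    QuaternionAlgebra.imJ_mul, QuaternionAlgebra.imK_mul] <;> (try field_simp) <;>
  first | ring1 | linear_combination hn | linear_combination 2*hn | linear_combination (-hn) | linear_combination (-2*hn) | linear_combination 4*hn | linear_combination (-4*hn)


theorem L24 (hq : q ≠ 0) (hm : r^2 + cp = 4*q*m) (hn : cp + 1 = 4*n) (hs : r = 2*s+1) :
    ((2 : ℚ)⁻¹ • (1 + Iq)) * ((2 * q)⁻¹ • (r • Jq + Iq * Jq)) =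
      (-m) • Jq + (s+1) • ((2 * q)⁻¹ • (r • Jq + Iq * Jq)) := by
  subst hs
  have hcp2 : cp = 4*q*m - (2*s+1)^2 := by linarith
  subst hcp2
  ext <;> simp [QuaternionAlgebra.re_mul, QuaternionAlgebra.imI_mul,
    QuaternionAlgebra.imJ_mul, QuaternionAlgebra.imK_mul] <;> (try field_simp) <;>
  first | ring1 | linear_combination hn | linear_combination 2*hn | linear_combination (-hn) | linear_combination (-2*hn) | linear_combination 4*hn | linear_combination (-4*hn)


theorem L42 (hq : q ≠ 0) (hm : r^2 + cp = 4*q*m) (hn : cp + 1 = 4*n) (hs : r = 2*s+1) :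
    ((2 * q)⁻¹ • (r • Jq + Iq * Jq)) * ((2 : ℚ)⁻¹ • (1 + Iq)) =
      m • Jq + (-s) • ((2 * q)⁻¹ • (r • Jq + Iq * Jq)) := by
  subst hs
  have hcp2 : cp = 4*q*m - (2*s+1)^2 := by linarith
  subst hcp2
  ext <;> simp [QuaternionAlgebra.re_mul, QuaternionAlgebra.imI_mul,
    QuaternionAlgebra.imJ_mul, QuaternionAlgebra.imK_mul] <;> (try field_simp) <;>
  first | ring1 | linear_combination hn | linear_combination 2*hn | linear_combination (-hn) | linear_combination (-2*hn) | linear_combination 4*hn | linear_combination (-4*hn)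


theorem L33 (hq : q ≠ 0) (hm : r^2 + cp = 4*q*m) (hn : cp + 1 = 4*n) (hs : r = 2*s+1) :
    Jq * Jq = (-q) • 1 := by
  subst hs
  have hcp2 : cp = 4*q*m - (2*s+1)^2 := by linarith
  subst hcp2
  ext <;> simp [QuaternionAlgebra.re_mul, QuaternionAlgebra.imI_mul,
    QuaternionAlgebra.imJ_mul, QuaternionAlgebra.imK_mul] <;> (try field_simp) <;>
  first | ring1 | linear_combination hn | linear_combination 2*hn | linear_combination (-hn) | linear_combination (-2*hn) | linear_combination 4*hn | linear_combination (-4*hn)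


theorem L34 (hq : q ≠ 0) (hm : r^2 + cp = 4*q*m) (hn : cp + 1 = 4*n) (hs : r = 2*s+1) :
    Jq * ((2 * q)⁻¹ • (r • Jq + Iq * Jq)) =
      (2 : ℚ)⁻¹ • (1 + Iq) + (-(s+1)) • 1 := by
  subst hs
  have hcp2 : cp = 4*q*m - (2*s+1)^2 := by linarith
  subst hcp2
  ext <;> simp [QuaternionAlgebra.re_mul, QuaternionAlgebra.imI_mul,
    QuaternionAlgebra.imJ_mul, QuaternionAlgebra.imK_mul] <;> (try field_simp) <;>
  first | ring1 | linear_combination hn | linear_combination 2*hn | linear_combination (-hn) | linear_combination (-2*hn) | linear_combination 4*hn | linear_combination (-4*hn)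


theorem L43 (hq : q ≠ 0) (hm : r^2 + cp = 4*q*m) (hn : cp + 1 = 4*n) (hs : r = 2*s+1) :
    ((2 * q)⁻¹ • (r • Jq + Iq * Jq)) * Jq =
      (-1 : ℚ) • ((2 : ℚ)⁻¹ • (1 + Iq)) + (-s) • 1 := by
  subst hs
  have hcp2 : cp = 4*q*m - (2*s+1)^2 := by linarith
  subst hcp2
  ext <;> simp [QuaternionAlgebra.re_mul, QuaternionAlgebra.imI_mul,
    QuaternionAlgebra.imJ_mul, QuaternionAlgebra.imK_mul] <;> (try field_simp) <;>
  first | ring1 | linear_combination hn | linear_combination 2*hn | linear_combination (-hn) | linear_combination (-2*hn) | linear_combination 4*hn | linear_combination (-4*hn)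


theorem L44 (hq : q ≠ 0) (hm : r^2 + cp = 4*q*m) (hn : cp + 1 = 4*n) (hs : r = 2*s+1) :
    ((2 * q)⁻¹ • (r • Jq + Iq * Jq)) * ((2 * q)⁻¹ • (r • Jq + Iq * Jq)) =
      (-m) • 1 := by
  subst hs
  have hcp2 : cp = 4*q*m - (2*s+1)^2 := by linarith
  subst hcp2
  ext <;> simp [QuaternionAlgebra.re_mul, QuaternionAlgebra.imI_mul,
    QuaternionAlgebra.imJ_mul, QuaternionAlgebra.imK_mul] <;> (try field_simp) <;>
  first | ring1 | linear_combination hn | linear_combination 2*hn | linear_combination (-hn) | linear_combination (-2*hn) | linear_combination 4*hn | linear_combination (-4*hn)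

end Aux

set_option maxHeartbeats 2000000 in
/-- If `cp ≡ 3 (mod 4)`, then `O'_c(q,r')` contains `1`, is closed under multiplication, and
its discriminant with respect to the basis `1, (1+i)/2, j, (r'·j+i·j)/(2q)` is `c²·p²`. -/
theorem O'cqr_isOrder_and_disc (p c q : ℕ) (hp : p.Prime) (hp3 : 3 < p) (hc : c.Prime)
    (hpc : p ≠ c) (hcp : c * p % 4 = 3) (hq : q.Prime) (hcond : SatisfiesCond1 p c q hq)
    (r' : ℤ) (hr' : (4 * (q : ℤ)) ∣ r' ^ 2 + (c : ℤ) * (p : ℤ)) :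
    (1 : ℍ[ℚ, -((c : ℚ) * (p : ℚ)), -(q : ℚ)]) ∈ O'cqr p c q r' ∧
    (∀ x ∈ O'cqr p c q r', ∀ y ∈ O'cqr p c q r', x * y ∈ O'cqr p c q r') ∧
    Matrix.det (Matrix.of fun s t : Fin 4 =>
        Trd (O'Basis p c q r' s * star (O'Basis p c q r' t))) =
      (c : ℚ) ^ 2 * (p : ℚ) ^ 2 := by
  -- numeric facts
  obtain ⟨m, hm⟩ := hr'
  have hcpZ : ((c : ℤ) * (p : ℤ)) % 4 = 3 := by
    have h : ((c * p : ℕ) : ℤ) % 4 = 3 := by exact_mod_cast hcp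
    push_cast at h; exact h
  obtain ⟨t, ht⟩ : ∃ t : ℤ, (c : ℤ) * p = 4 * t + 3 := ⟨((c : ℤ) * p) / 4, by omega⟩
  have hoddsq : Odd (r' ^ 2) := ⟨2 * (q * m - t - 1), by linarith⟩
  obtain ⟨s, hs⟩ : Odd r' := (Int.odd_pow' (two_ne_zero)).mp hoddsq
  have hnZ : (c : ℤ) * p + 1 = 4 * (t + 1) := by linarith
  -- rational versions
  have hQq : (q : ℚ) ≠ 0 := Nat.cast_ne_zero.mpr hq.pos.ne'
  have hQm : (r' : ℚ) ^ 2 + (c : ℚ) * (p : ℚ) = 4 * (q : ℚ) * ((m : ℤ) : ℚ) := by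
    exact_mod_cast hm
  have hQn : (c : ℚ) * (p : ℚ) + 1 = 4 * ((t + 1 : ℤ) : ℚ) := by exact_mod_cast hnZ
  have hQs : (r' : ℚ) = 2 * ((s : ℤ) : ℚ) + 1 := by exact_mod_cast hs
  set S := O'cqr p c q r' with hS
  have hb0 : (1 : ℍ[ℚ, -((c : ℚ) * (p : ℚ)), -(q : ℚ)]) ∈ S :=
    Submodule.subset_span ⟨0, rfl⟩
  have hb1 : (2 : ℚ)⁻¹ • (1 + (⟨0, 1, 0, 0⟩ : ℍ[ℚ, -((c : ℚ) * (p : ℚ)), -(q : ℚ)])) ∈ S :=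
    Submodule.subset_span ⟨1, rfl⟩
  have hb2 : (⟨0, 0, 1, 0⟩ : ℍ[ℚ, -((c : ℚ) * (p : ℚ)), -(q : ℚ)]) ∈ S :=
    Submodule.subset_span ⟨2, rfl⟩
  have hb3 : (2 * (q : ℚ))⁻¹ • ((r' : ℚ) • (⟨0, 0, 1, 0⟩ : ℍ[ℚ, -((c : ℚ) * (p : ℚ)), -(q : ℚ)]) +
      (⟨0, 1, 0, 0⟩ : ℍ[ℚ, -((c : ℚ) * (p : ℚ)), -(q : ℚ)]) * ⟨0, 0, 1, 0⟩) ∈ S :=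
    Submodule.subset_span ⟨3, rfl⟩
  have hsm : ∀ (a : ℚ), (∃ z : ℤ, (z : ℚ) = a) →
      ∀ x ∈ S, a • x ∈ S := by
    rintro a ⟨z, rfl⟩ x hx
    rw [Int.cast_smul_eq_zsmul]
    exact Submodule.smul_mem _ z hx
  have E0 : O'Basis p c q r' 0 = 1 := rfl
  have E1 : O'Basis p c q r' 1 =
      (2 : ℚ)⁻¹ • (1 + (⟨0, 1, 0, 0⟩ : ℍ[ℚ, -((c : ℚ) * (p : ℚ)), -(q : ℚ)])) := rfl
  have E2 : O'Basis p c q r' 2 = (⟨0, 0, 1, 0⟩ : ℍ[ℚ, -((c : ℚ) * (p : ℚ)), -(q : ℚ)]) := rfl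
  have E3 : O'Basis p c q r' 3 =
      (2 * (q : ℚ))⁻¹ • ((r' : ℚ) • (⟨0, 0, 1, 0⟩ : ℍ[ℚ, -((c : ℚ) * (p : ℚ)), -(q : ℚ)]) +
        (⟨0, 1, 0, 0⟩ : ℍ[ℚ, -((c : ℚ) * (p : ℚ)), -(q : ℚ)]) * ⟨0, 0, 1, 0⟩) := rfl
  have key : ∀ u v : Fin 4, O'Basis p c q r' u * O'Basis p c q r' v ∈ S := by
    have k00 : O'Basis p c q r' 0 * O'Basis p c q r' 0 ∈ S := by
      rw [E0, one_mul]; exact hb0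
    have k01 : O'Basis p c q r' 0 * O'Basis p c q r' 1 ∈ S := by
      rw [E0, one_mul, E1]; exact hb1
    have k02 : O'Basis p c q r' 0 * O'Basis p c q r' 2 ∈ S := by
      rw [E0, one_mul, E2]; exact hb2
    have k03 : O'Basis p c q r' 0 * O'Basis p c q r' 3 ∈ S := by
      rw [E0, one_mul, E3]; exact hb3
    have k10 : O'Basis p c q r' 1 * O'Basis p c q r' 0 ∈ S := by
      rw [E0, mul_one, E1]; exact hb1
    have k20 : O'Basis p c q r' 2 * O'Basis p c q r' 0 ∈ S := by
      rw [E0, mul_one, E2]; exact hb2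
    have k30 : O'Basis p c q r' 3 * O'Basis p c q r' 0 ∈ S := by
      rw [E0, mul_one, E3]; exact hb3
    have k11 : O'Basis p c q r' 1 * O'Basis p c q r' 1 ∈ S := by
      rw [E1, L22 hQq hQm hQn hQs]
      exact Submodule.add_mem _ (hsm _ ⟨-(t + 1), by push_cast; ring⟩ _ hb0) hb1
    have k12 : O'Basis p c q r' 1 * O'Basis p c q r' 2 ∈ S := by
      rw [E1, E2, L23 hQq hQm hQn hQs]
      exact Submodule.add_mem _ (hsm _ ⟨-s, by push_cast; ring⟩ _ hb2)
        (hsm _ ⟨q, by push_cast; ring⟩ _ hb3)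
    have k21 : O'Basis p c q r' 2 * O'Basis p c q r' 1 ∈ S := by
      rw [E1, E2, L32 hQq hQm hQn hQs]
      exact Submodule.add_mem _ (hsm _ ⟨s + 1, by push_cast; ring⟩ _ hb2)
        (hsm _ ⟨-(q : ℤ), by push_cast; ring⟩ _ hb3)
    have k13 : O'Basis p c q r' 1 * O'Basis p c q r' 3 ∈ S := by
      rw [E1, E3, L24 hQq hQm hQn hQs]
      exact Submodule.add_mem _ (hsm _ ⟨-m, by push_cast; ring⟩ _ hb2)
        (hsm _ ⟨s + 1, by push_cast; ring⟩ _ hb3)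
    have k31 : O'Basis p c q r' 3 * O'Basis p c q r' 1 ∈ S := by
      rw [E1, E3, L42 hQq hQm hQn hQs]
      exact Submodule.add_mem _ (hsm _ ⟨m, by push_cast; ring⟩ _ hb2)
        (hsm _ ⟨-s, by push_cast; ring⟩ _ hb3)
    have k22 : O'Basis p c q r' 2 * O'Basis p c q r' 2 ∈ S := by
      rw [E2, L33 hQq hQm hQn hQs]
      exact hsm _ ⟨-(q : ℤ), by push_cast; ring⟩ _ hb0
    have k23 : O'Basis p c q r' 2 * O'Basis p c q r' 3 ∈ S := by
      rw [E2, E3, L34 hQq hQm hQn hQs]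
      exact Submodule.add_mem _ hb1 (hsm _ ⟨-(s + 1), by push_cast; ring⟩ _ hb0)
    have k32 : O'Basis p c q r' 3 * O'Basis p c q r' 2 ∈ S := by
      rw [E2, E3, L43 hQq hQm hQn hQs]
      exact Submodule.add_mem _ (hsm _ ⟨-1, by push_cast; ring⟩ _ hb1)
        (hsm _ ⟨-s, by push_cast; ring⟩ _ hb0)
    have k33 : O'Basis p c q r' 3 * O'Basis p c q r' 3 ∈ S := by
      rw [E3, L44 hQq hQm hQn hQs]
      exact hsm _ ⟨-m, by push_cast; ring⟩ _ hb0
    intro u v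
    fin_cases u <;> fin_cases v
    · exact k00
    · exact k01
    · exact k02
    · exact k03
    · exact k10
    · exact k11
    · exact k12
    · exact k13
    · exact k20
    · exact k21
    · exact k22
    · exact k23
    · exact k30
    · exact k31
    · exact k32
    · exact k33
  refine ⟨hb0, ?_, ?_⟩
  · -- closure under multiplication
    have main : ∀ u : Fin 4, ∀ y ∈ S, O'Basis p c q r' u * y ∈ S := by
      intro u y hy
      induction hy using Submodule.span_induction with
      | mem z hz => obtain ⟨v, rfl⟩ := hz; exact key u v
      | zero => rw [mul_zero]; exact Submodule.zero_mem S
      | add a b _ _ ha hb => rw [mul_add]; exact Submodule.add_mem _ ha hb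
      | smul z a _ ha => rw [mul_smul_comm]; exact Submodule.smul_mem _ z ha
    intro x hx y hy
    induction hx using Submodule.span_induction with
    | mem z hz => obtain ⟨u, rfl⟩ := hz; exact main u y hy
    | zero => rw [zero_mul]; exact Submodule.zero_mem S
    | add a b _ _ ha hb => rw [add_mul]; exact Submodule.add_mem _ ha hb
    | smul z a _ ha => rw [smul_mul_assoc]; exact Submodule.smul_mem _ z ha
  · -- discriminant
    have hM : (Matrix.of fun u v : Fin 4 =>
        Trd (O'Basis p c q r' u * star (O'Basis p c q r' v))) =
        !![2, 1, 0, 0; 1, (1 + (c : ℚ) * p) / 2, 0, 0; 0, 0, 2 * (q : ℚ), (r' : ℚ);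
           0, 0, (r' : ℚ), ((r' : ℚ) ^ 2 + (c : ℚ) * p) / (2 * (q : ℚ))] := by
      ext u v
      fin_cases u <;> fin_cases v <;>
        simp only [O'Basis, Trd, Matrix.of_apply, Matrix.cons_val_zero, Matrix.cons_val_one,
          Matrix.head_cons, Matrix.cons_val_succ, Matrix.cons_val', Matrix.empty_val',
          Matrix.cons_val_fin_one, Matrix.head_fin_const,
          QuaternionAlgebra.re_add, QuaternionAlgebra.imI_add, QuaternionAlgebra.imJ_add,
          QuaternionAlgebra.imK_add, QuaternionAlgebra.re_smul, QuaternionAlgebra.imI_smul,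
          QuaternionAlgebra.imJ_smul, QuaternionAlgebra.imK_smul, QuaternionAlgebra.re_one,
          QuaternionAlgebra.imI_one, QuaternionAlgebra.imJ_one, QuaternionAlgebra.imK_one,
          QuaternionAlgebra.re_star, QuaternionAlgebra.imI_star, QuaternionAlgebra.imJ_star,
          QuaternionAlgebra.imK_star, QuaternionAlgebra.re_mul, QuaternionAlgebra.imI_mul,
          QuaternionAlgebra.imJ_mul, QuaternionAlgebra.imK_mul, smul_eq_mul, Fin.reduceFinMk, Matrix.cons_val, Fin.isValue] <;>
        (try field_simp) <;> ring
    rw [hM]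
    simp [Matrix.det_succ_row_zero, Fin.sum_univ_succ, Fin.succAbove]
    field_simp
    ring
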